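/- Let ω be a complex primitive m-th root of unity and let μ_1, μ_2 be probability distributions over Z_m^n. If |E_{x∼μ_1, y∼μ_2}[ω^{⟨x,y⟩}]| ≥ ε, then cp(μ_1)·cp(μ_2) ≥ ε^2/m^n. -/

import Mathlib

open Finset

/-- Inner product of two vectors in `(ZMod m)^n`. -/
def mvInner {m n : ℕ} (u v : Fin n → ZMod m) : ZMod m := ∑ k, u k * v k

section aux

variable {m : ℕ} [NeZero m] {ω : ℂ}

lemma e_add (hω : IsPrimitiveRoot ω m) (a b : ZMod m) :
    ω ^ (a + b).val = ω ^ a.val * ω ^ b.val := by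
  rw [← pow_add, ZMod.val_add]
  conv_rhs => rw [← Nat.mod_add_div (a.val + b.val) m]
  rw [pow_add, pow_mul, hω.pow_eq_one, one_pow, mul_one]

lemma e_mul (hω : IsPrimitiveRoot ω m) (a b : ZMod m) :
    ω ^ (a * b).val = (ω ^ a.val) ^ b.val := by
  rw [← pow_mul, ZMod.val_mul]
  conv_rhs => rw [← Nat.mod_add_div (a.val * b.val) m]
  rw [pow_add, pow_mul, hω.pow_eq_one, one_pow, mul_one]

lemma e_conj (hω : IsPrimitiveRoot ω m) (a : ZMod m) :
    (starRingEnd ℂ) (ω ^ a.val) = ω ^ (-a).val := by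
  have h1 : ω ^ a.val * ω ^ (-a).val = 1 := by
    rw [← e_add hω, add_neg_cancel]
    simp [ZMod.val_zero]
  have hω1 : ‖ω‖ = 1 :=
    Complex.norm_eq_one_of_pow_eq_one hω.pow_eq_one (NeZero.ne m)
  have habs : ‖ω ^ a.val‖ = 1 := by rw [norm_pow, hω1, one_pow]
  rw [← Complex.inv_eq_conj habs]
  exact inv_eq_of_mul_eq_one_right h1

lemma e_sum (hω : IsPrimitiveRoot ω m) {ι : Type*} (s : Finset ι) (v : ι → ZMod m) :
    ω ^ (∑ k ∈ s, v k).val = ∏ k ∈ s, ω ^ (v k).val := by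
  induction s using Finset.cons_induction with
  | empty => simp [ZMod.val_zero]
  | cons a s ha ih => rw [Finset.sum_cons, Finset.prod_cons, e_add hω, ih]

lemma sum_char (hω : IsPrimitiveRoot ω m) (hm : 2 ≤ m) (c : ZMod m) :
    ∑ a : ZMod m, ω ^ (a * c).val = if c = 0 then (m : ℂ) else 0 := by
  by_cases hc : c = 0
  · simp [hc, ZMod.val_zero, ZMod.card]
  · rw [if_neg hc]
    have hne : (ω ^ c.val) ≠ 1 :=
      hω.pow_ne_one_of_pos_of_lt (ZMod.val_pos.mpr hc).ne' (ZMod.val_lt c)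
    have hpow : (ω ^ c.val) ^ m = 1 := by
      rw [← pow_mul, mul_comm, pow_mul, hω.pow_eq_one, one_pow]
    have h1 : ∀ a : ZMod m, ω ^ (a * c).val = (ω ^ c.val) ^ a.val := by
      intro a; rw [mul_comm a c, e_mul hω]
    rw [Finset.sum_congr rfl fun a _ => h1 a]
    have h2 : ∑ a : ZMod m, (ω ^ c.val) ^ a.val = ∑ i ∈ range m, (ω ^ c.val) ^ i := by
      refine Finset.sum_nbij' (fun a => a.val) (fun i => (i : ZMod m)) ?_ ?_ ?_ ?_ ?_
      · intro a _; exact Finset.mem_range.mpr (ZMod.val_lt a)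
      · intro i _; exact Finset.mem_univ _
      · intro a _; simp [ZMod.natCast_val]
      · intro i hi; exact ZMod.val_cast_of_lt (Finset.mem_range.mp hi)
      · intro a _; rfl
    rw [h2, geom_sum_eq hne, hpow, sub_self, zero_div]

lemma sum_char_vec (hω : IsPrimitiveRoot ω m) (hm : 2 ≤ m) {n : ℕ}
    (z : Fin n → ZMod m) :
    ∑ x : Fin n → ZMod m, ω ^ (mvInner x z).val
      = if z = 0 then ((m : ℂ)) ^ n else 0 := by
  have h1 : ∀ x : Fin n → ZMod m, ω ^ (mvInner x z).val = ∏ k, ω ^ (x k * z k).val :=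
    fun x => e_sum hω univ _
  rw [Finset.sum_congr rfl fun x _ => h1 x, ← Fintype.prod_sum fun k a => ω ^ (a * z k).val]
  rw [Finset.prod_congr rfl fun k _ => sum_char hω hm (z k)]
  by_cases hz : z = 0
  · simp [hz]
  · rw [if_neg hz]
    obtain ⟨k, hk⟩ := Function.ne_iff.mp hz
    exact Finset.prod_eq_zero (Finset.mem_univ k) (if_neg (by simpa using hk))

end aux

lemma mvInner_sub {m n : ℕ} (x y y' : Fin n → ZMod m) :
    mvInner x (y - y') = mvInner x y - mvInner x y' := by
  simp [mvInner, mul_sub, Finset.sum_sub_distrib]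


/-- Lemma 2.11: if two distributions on `(ZMod m)^n` have a biased joint character sum, then
the product of their collision probabilities is at least `ε²/mⁿ`. -/
theorem collision_prob_of_bias (m n : ℕ) [NeZero m] (hm : 2 ≤ m)
    (ω : ℂ) (hω : IsPrimitiveRoot ω m)
    (μ₁ μ₂ : (Fin n → ZMod m) → ℝ)
    (h₁pos : ∀ x, 0 ≤ μ₁ x) (h₁sum : ∑ x, μ₁ x = 1)
    (h₂pos : ∀ x, 0 ≤ μ₂ x) (h₂sum : ∑ x, μ₂ x = 1)
    (ε : ℝ) (hε : 0 ≤ ε)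
    (hbias : ε ≤ ‖(∑ x : Fin n → ZMod m, ∑ y : Fin n → ZMod m,
      (μ₁ x : ℂ) * (μ₂ y : ℂ) * ω ^ (mvInner x y).val)‖) :
    ε ^ 2 / (m : ℝ) ^ n ≤ (∑ x, (μ₁ x) ^ 2) * (∑ y, (μ₂ y) ^ 2) := by
  set f : (Fin n → ZMod m) → ℂ := fun x => ∑ y, (μ₂ y : ℂ) * ω ^ (mvInner x y).val with hf
  -- rewrite the bias sum
  have hre : (∑ x : Fin n → ZMod m, ∑ y : Fin n → ZMod m,
      (μ₁ x : ℂ) * (μ₂ y : ℂ) * ω ^ (mvInner x y).val)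
      = ∑ x, (μ₁ x : ℂ) * f x := by
    refine Finset.sum_congr rfl fun x _ => ?_
    rw [hf, Finset.mul_sum]
    exact Finset.sum_congr rfl fun y _ => by ring
  -- step 1 : ε ≤ ∑ μ₁ x * |f x|
  have h1 : ε ≤ ∑ x, μ₁ x * ‖f x‖ := by
    refine hbias.trans ?_
    rw [hre]
    refine (norm_sum_le _ _).trans_eq ?_
    refine Finset.sum_congr rfl fun x _ => ?_
    rw [norm_mul, Complex.norm_real, Real.norm_eq_abs, abs_of_nonneg (h₁pos x)]
  -- step 2 : ∑ |f x|² = mⁿ * ∑ μ₂²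
  have h2 : ∑ x, (‖f x‖) ^ 2 = (m : ℝ) ^ n * ∑ y, (μ₂ y) ^ 2 := by
    have hC : (↑(∑ x, (‖f x‖) ^ 2) : ℂ)
        = (↑((m : ℝ) ^ n * ∑ y, (μ₂ y) ^ 2) : ℂ) := by
      push_cast
      calc ∑ x, ((‖f x‖ : ℝ) : ℂ) ^ 2
          = ∑ x, f x * (starRingEnd ℂ) (f x) := by
            refine Finset.sum_congr rfl fun x _ => ?_
            rw [Complex.mul_conj]
            norm_cast
            exact Complex.sq_norm (f x)
        _ = ∑ x, ∑ y, ∑ y', ((μ₂ y : ℂ) * μ₂ y') * ω ^ (mvInner x (y - y')).val := by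
            refine Finset.sum_congr rfl fun x _ => ?_
            rw [hf, map_sum, Finset.sum_mul_sum]
            refine Finset.sum_congr rfl fun y _ => Finset.sum_congr rfl fun y' _ => ?_
            rw [map_mul, Complex.conj_ofReal, e_conj hω, mvInner_sub,
              sub_eq_add_neg, e_add hω]
            ring
        _ = ∑ y, ∑ y', ((μ₂ y : ℂ) * μ₂ y')
              * ∑ x : Fin n → ZMod m, ω ^ (mvInner x (y - y')).val := by
            rw [Finset.sum_comm]
            refine Finset.sum_congr rfl fun y _ => ?_
            rw [Finset.sum_comm]
            refine Finset.sum_congr rfl fun y' _ => ?_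
            rw [Finset.mul_sum]
        _ = ∑ y, ∑ y', ((μ₂ y : ℂ) * μ₂ y')
              * (if y - y' = 0 then ((m : ℂ)) ^ n else 0) := by
            refine Finset.sum_congr rfl fun y _ => Finset.sum_congr rfl fun y' _ => ?_
            rw [sum_char_vec hω hm]
        _ = (m : ℂ) ^ n * ∑ y, (μ₂ y : ℂ) ^ 2 := by
            rw [Finset.mul_sum]
            refine Finset.sum_congr rfl fun y _ => ?_
            have : ∀ y' : Fin n → ZMod m,
                ((μ₂ y : ℂ) * μ₂ y') * (if y - y' = 0 then ((m : ℂ)) ^ n else 0)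
                = if y = y' then ((μ₂ y : ℂ) * μ₂ y') * (m : ℂ) ^ n else 0 := by
              intro y'
              by_cases h : y = y' <;> simp [h, sub_eq_zero]
            rw [Finset.sum_congr rfl fun y' _ => this y', Finset.sum_ite_eq univ y]
            simp [sq]
            ring
    have := Complex.ofReal_inj.mp hC
    linarith [this]
  -- step 3 : Cauchy-Schwarz
  have h3 : (∑ x, μ₁ x * ‖f x‖) ^ 2
      ≤ (∑ x, (μ₁ x) ^ 2) * (∑ x, (‖f x‖) ^ 2) :=
    Finset.sum_mul_sq_le_sq_mul_sq univ _ _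
  have h4 : ε ^ 2 ≤ (∑ x, (μ₁ x) ^ 2) * ((m : ℝ) ^ n * ∑ y, (μ₂ y) ^ 2) := by
    calc ε ^ 2 ≤ (∑ x, μ₁ x * ‖f x‖) ^ 2 := by
          apply pow_le_pow_left₀ hε h1
      _ ≤ _ := by rw [← h2]; exact h3
  have hmn : (0 : ℝ) < (m : ℝ) ^ n := by positivity
  rw [div_le_iff₀ hmn]
  nlinarith [h4]
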